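/- arXiv:1406.3390 — 4 statements merged into one kernel-verified Lean document; each statement's English description precedes it below -/
import Mathlib

section
/- Let α, p ∈ (0,1) with either (α > 1/2 and 1/2 < p < α) or (α < 1/2 and α < p < 1/2), and set σ = (1−p)/p and r = σ^{−1}(1−α) + σα. Then r < 1 and (2·(1−r)^{−1} − 1)^{−1} = (2p−1)(α−p)/(α(1−p)+(1−α)p), and this quantity is strictly positive. -/
/-- For `α, p ∈ (0,1)` with either (`α > 1/2` and `1/2 < p < α`) or
(`α < 1/2` and `α < p < 1/2`), setting `σ = (1-p)/p` and `r = σ⁻¹ (1-α) + σ α`, one has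
`r < 1`, `(2 (1-r)⁻¹ - 1)⁻¹ = (2p-1)(α-p)/(α(1-p)+(1-α)p)`, and this quantity is
strictly positive. -/
theorem stmt3 (α p : ℝ) (hα0 : 0 < α) (hα1 : α < 1) (hp0 : 0 < p) (hp1 : p < 1)
    (hcase : (1 / 2 < α ∧ 1 / 2 < p ∧ p < α) ∨ (α < 1 / 2 ∧ α < p ∧ p < 1 / 2)) :
    ((1 - p) / p)⁻¹ * (1 - α) + ((1 - p) / p) * α < 1 ∧
    (2 * (1 - (((1 - p) / p)⁻¹ * (1 - α) + ((1 - p) / p) * α))⁻¹ - 1)⁻¹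
      = (2 * p - 1) * (α - p) / (α * (1 - p) + (1 - α) * p) ∧
    0 < (2 * (1 - (((1 - p) / p)⁻¹ * (1 - α) + ((1 - p) / p) * α))⁻¹ - 1)⁻¹ := by
  have hp : (p : ℝ) ≠ 0 := ne_of_gt hp0
  have h1p : (1 - p : ℝ) ≠ 0 := by linarith
  have hD : 0 < (2 * p - 1) * (α - p) := by
    rcases hcase with ⟨h1, h2, h3⟩ | ⟨h1, h2, h3⟩
    · have : 0 < 2 * p - 1 := by linarith
      have : 0 < α - p := by linarith
      positivity
    · have : 2 * p - 1 < 0 := by linarith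
      have : α - p < 0 := by linarith
      exact mul_pos_of_neg_of_neg ‹2 * p - 1 < 0› ‹α - p < 0›
  have hE : 0 < α * (1 - p) + (1 - α) * p := by nlinarith
  have hkey : ((1 - p) / p)⁻¹ * (1 - α) + ((1 - p) / p) * α
      = 1 - (2 * p - 1) * (α - p) / (p * (1 - p)) := by
    field_simp
    ring
  have hlt : ((1 - p) / p)⁻¹ * (1 - α) + ((1 - p) / p) * α < 1 := by
    rw [hkey]
    have : 0 < (2 * p - 1) * (α - p) / (p * (1 - p)) := by
      apply div_pos hD; nlinarith
    linarith
  have hstep : 2 * (p * (1 - p) / ((2 * p - 1) * (α - p))) - 1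
      = (α * (1 - p) + (1 - α) * p) / ((2 * p - 1) * (α - p)) := by
    rw [eq_div_iff hD.ne']
    have e : p * (1 - p) / ((2 * p - 1) * (α - p)) * ((2 * p - 1) * (α - p)) = p * (1 - p) :=
      div_mul_cancel₀ _ hD.ne'
    linear_combination 2 * e
  refine ⟨hlt, ?_, ?_⟩
  · rw [hkey, sub_sub_cancel, inv_div, hstep, inv_div]
  · rw [hkey, sub_sub_cancel, inv_div, hstep, inv_div]
    exact div_pos hD hE
end

section
/- Let a, b ∈ (0,1), σ > 0, and let M be the 2×2 real matrix M = [[(1−a)σ^{−1}, aσ], [bσ^{−1}, (1−b)σ]]. Then the spectral radius of M (the maximum of the moduli of its complex eigenvalues) is strictly less than 1 if and only if σ lies strictly between 1 and (1−a)/(1−b) (i.e., 1 < σ < (1−a)/(1−b) when a < b, or (1−a)/(1−b) < σ < 1 when a > b). -/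
private lemma jury_aux (T D : ℝ) (hT : 0 < T) (hD1 : -1 < D) (hD2 : D < 1) :
    (∀ z : ℂ, z ^ 2 - (T : ℂ) * z + (D : ℂ) = 0 → ‖z‖ < 1) ↔ T < 1 + D := by
  constructor
  · intro h
    by_contra hle
    push_neg at hle
    have hΔ : 0 ≤ T ^ 2 - 4 * D := by nlinarith [sq_nonneg (1 - D)]
    have hs : Real.sqrt (T ^ 2 - 4 * D) ^ 2 = T ^ 2 - 4 * D := Real.sq_sqrt hΔ
    have hs0 : 0 ≤ Real.sqrt (T ^ 2 - 4 * D) := Real.sqrt_nonneg _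
    set s := Real.sqrt (T ^ 2 - 4 * D)
    have hx : ((T + s) / 2) ^ 2 - T * ((T + s) / 2) + D = 0 := by linear_combination hs / 4
    have hroot : (((T + s) / 2 : ℝ) : ℂ) ^ 2 - (T : ℂ) * (((T + s) / 2 : ℝ) : ℂ) + (D : ℂ) = 0 := by
      exact_mod_cast hx
    have habs := h _ hroot
    rw [Complex.norm_real, Real.norm_eq_abs] at habs
    have hx1 : (1 : ℝ) ≤ (T + s) / 2 := by
      rcases le_or_gt 2 T with h2 | h2
      · linarith
      · have : 2 - T ≤ s := by
          by_contra hc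
          push_neg at hc
          nlinarith
        linarith
    rw [abs_of_nonneg (by linarith)] at habs
    linarith
  · intro hTD z hz
    have h1 : z.re ^ 2 - z.im ^ 2 - T * z.re + D = 0 := by
      have := congrArg Complex.re hz
      simpa [pow_two, Complex.mul_re, Complex.mul_im] using this
    have h2 : z.im * (2 * z.re - T) = 0 := by
      have := congrArg Complex.im hz
      simp [pow_two, Complex.mul_re, Complex.mul_im] at this
      linarith
    have hgoal : z.re ^ 2 + z.im ^ 2 < 1 := by
      rcases mul_eq_zero.mp h2 with hy | hx
      · have h1' : z.re ^ 2 - T * z.re + D = 0 := by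
          linear_combination h1 + z.im * hy
        have hu : (1 - z.re) * (1 - T + z.re) = 1 - T + D := by linear_combination -h1'
        have hv : (1 + z.re) * (1 + T - z.re) = 1 + T + D := by linear_combination -h1'
        have hu' : 0 < (1 - z.re) * (1 - T + z.re) := by rw [hu]; linarith
        have hv' : 0 < (1 + z.re) * (1 + T - z.re) := by rw [hv]; linarith
        have hr1 : z.re < 1 := by
          by_contra hc
          push_neg at hc
          nlinarith
        have hr2 : -1 < z.re := by
          by_contra hc
          push_neg at hc
          nlinarith
        rw [hy]
        nlinarith
      · have : z.re ^ 2 + z.im ^ 2 = D := by linear_combination -h1 + z.re * hx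
        linarith
    have hsq : ‖z‖ ^ 2 = z.re ^ 2 + z.im ^ 2 := by
      rw [Complex.sq_norm, Complex.normSq_apply]; ring
    nlinarith [norm_nonneg z]

/-- For `a, b ∈ (0,1)` and `σ > 0`, the spectral radius of the matrix
`M = [[(1-a)σ⁻¹, aσ], [bσ⁻¹, (1-b)σ]]` (the maximum of the moduli of its complex
eigenvalues) is strictly less than 1 iff `σ` lies strictly between `1` and
`(1-a)/(1-b)`. -/
theorem stmt4 (a b σ : ℝ) (ha0 : 0 < a) (ha1 : a < 1) (hb0 : 0 < b) (hb1 : b < 1)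
    (hσ : 0 < σ) :
    (∀ z ∈ spectrum ℂ
        ((Matrix.of ![![(1 - a) * σ⁻¹, a * σ], ![b * σ⁻¹, (1 - b) * σ]]).map
          (Complex.ofReal ·)),
      ‖z‖ < 1) ↔
      (1 < σ ∧ σ < (1 - a) / (1 - b)) ∨ ((1 - a) / (1 - b) < σ ∧ σ < 1) := by
  have ha1' : 0 < 1 - a := by linarith
  have hb1' : 0 < 1 - b := by linarith
  have hinv : σ⁻¹ * σ = 1 := inv_mul_cancel₀ hσ.ne'
  have hinvC : (σ : ℂ)⁻¹ * (σ : ℂ) = 1 := by exact_mod_cast hinv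
  have key : ∀ z : ℂ, z ∈ spectrum ℂ
      ((Matrix.of ![![(1 - a) * σ⁻¹, a * σ], ![b * σ⁻¹, (1 - b) * σ]]).map
        (Complex.ofReal ·)) ↔
      z ^ 2 - (((1 - a) * σ⁻¹ + (1 - b) * σ : ℝ) : ℂ) * z + ((1 - a - b : ℝ) : ℂ) = 0 := by
    intro z
    rw [spectrum.mem_iff, Matrix.isUnit_iff_isUnit_det, isUnit_iff_ne_zero, not_ne_iff,
      Matrix.det_fin_two]
    simp only [Matrix.sub_apply, Matrix.algebraMap_matrix_apply, Matrix.map_apply,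
      Matrix.of_apply, Matrix.cons_val', Matrix.cons_val_zero, Matrix.cons_val_one,
      Matrix.head_cons, Matrix.head_fin_const, Matrix.empty_val', Matrix.cons_val_fin_one,
      Algebra.algebraMap_self, RingHom.id_apply, if_true, if_false, ite_true, ite_false, reduceIte]
    constructor <;> intro h <;> push_cast at h ⊢
    · linear_combination h - ((1 : ℂ) - a - b) * hinvC
    · linear_combination h + ((1 : ℂ) - a - b) * hinvC
  simp only [key]
  have hT : 0 < (1 - a) * σ⁻¹ + (1 - b) * σ :=
    add_pos (mul_pos ha1' (inv_pos.mpr hσ)) (mul_pos hb1' hσ)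
  rw [jury_aux _ _ hT (by linarith) (by linarith)]
  -- now pure real algebra
  have hid : (σ - 1) * ((1 - b) * σ - (1 - a)) =
      (((1 - a) * σ⁻¹ + (1 - b) * σ) - (1 + (1 - a - b))) * σ := by
    linear_combination (a - 1) * hinv
  constructor
  · intro h
    have hfac : (σ - 1) * ((1 - b) * σ - (1 - a)) < 0 := by
      rw [hid]
      have : ((1 - a) * σ⁻¹ + (1 - b) * σ) - (1 + (1 - a - b)) < 0 := by linarith
      exact mul_neg_of_neg_of_pos this hσ
    rcases mul_neg_iff.mp hfac with ⟨h1, h2⟩ | ⟨h1, h2⟩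
    · left
      refine ⟨by linarith, ?_⟩
      rw [lt_div_iff₀ hb1']
      nlinarith
    · right
      refine ⟨?_, by linarith⟩
      rw [div_lt_iff₀ hb1']
      nlinarith
  · intro h
    have hfac : (σ - 1) * ((1 - b) * σ - (1 - a)) < 0 := by
      rcases h with ⟨h1, h2⟩ | ⟨h1, h2⟩
      · rw [lt_div_iff₀ hb1'] at h2
        apply mul_neg_of_pos_of_neg <;> nlinarith
      · rw [div_lt_iff₀ hb1'] at h1
        apply mul_neg_of_neg_of_pos <;> nlinarith
    rw [hid] at hfac
    nlinarith
end

section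
/- Let a, b ∈ (0,1), let p ∈ (0,1) be such that σ = (1−p)/p lies strictly between 1 and (1−a)/(1−b), let M = [[(1−a)σ^{−1}, aσ], [bσ^{−1}, (1−b)σ]], let π be the row vector (b/(a+b), a/(a+b)), and let 𝟙 = (1,1)ᵀ. Then I − M is invertible, 2·π(I−M)^{−1}𝟙 − 1 ≠ 0, and (2·π(I−M)^{−1}𝟙 − 1)^{−1} = (2p−1)·[(1−b)(1−p) − (1−a)p] / [(b + (a−b)/(a+b))(1−p) + (a − (a−b)/(a+b))p], and this quantity is strictly positive. -/
open Matrix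
/-- For `a, b ∈ (0,1)` and `p ∈ (0,1)` such that `σ = (1-p)/p` lies
strictly between `1` and `(1-a)/(1-b)`, with `M = [[(1-a)σ⁻¹, aσ], [bσ⁻¹, (1-b)σ]]`,
`π = (b/(a+b), a/(a+b))` and `𝟙 = (1,1)ᵀ`:  `I - M` is invertible,
`2 π (I-M)⁻¹ 𝟙 - 1 ≠ 0`, and
`(2 π (I-M)⁻¹ 𝟙 - 1)⁻¹ = (2p-1)[(1-b)(1-p)-(1-a)p] /
  [(b + (a-b)/(a+b))(1-p) + (a - (a-b)/(a+b))p] > 0`. -/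
theorem stmt7 (a b p : ℝ) (ha0 : 0 < a) (ha1 : a < 1) (hb0 : 0 < b) (hb1 : b < 1)
    (hp0 : 0 < p) (hp1 : p < 1)
    (hbetween : (1 < (1 - p) / p ∧ (1 - p) / p < (1 - a) / (1 - b)) ∨
      ((1 - a) / (1 - b) < (1 - p) / p ∧ (1 - p) / p < 1)) :
    let σ : ℝ := (1 - p) / p
    let M : Matrix (Fin 2) (Fin 2) ℝ :=
      Matrix.of ![![(1 - a) * σ⁻¹, a * σ], ![b * σ⁻¹, (1 - b) * σ]]
    let piv : Fin 2 → ℝ := ![b / (a + b), a / (a + b)]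
    let ES : ℝ := piv ⬝ᵥ ((1 - M)⁻¹ *ᵥ ![1, 1])
    IsUnit (1 - M) ∧
    2 * ES - 1 ≠ 0 ∧
    (2 * ES - 1)⁻¹ = (2 * p - 1) * ((1 - b) * (1 - p) - (1 - a) * p) /
      ((b + (a - b) / (a + b)) * (1 - p) + (a - (a - b) / (a + b)) * p) ∧
    0 < (2 * ES - 1)⁻¹ := by
  intro σ M piv ES
  have hq0 : (0:ℝ) < 1 - p := by linarith
  have hab : (0:ℝ) < a + b := by linarith
  have h1a : (0:ℝ) < 1 - a := by linarith
  have h1b : (0:ℝ) < 1 - b := by linarith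
  have hcase : (p < 1 - p ∧ (1-b)*(1-p) < (1-a)*p) ∨
      (1 - p < p ∧ (1-a)*p < (1-b)*(1-p)) := by
    rcases hbetween with ⟨h1, h2⟩ | ⟨h1, h2⟩
    · rw [lt_div_iff₀ hp0, one_mul] at h1
      rw [div_lt_div_iff₀ hp0 h1b] at h2
      exact Or.inl ⟨h1, by nlinarith [h2]⟩
    · rw [div_lt_iff₀ hp0, one_mul] at h2
      rw [div_lt_div_iff₀ h1b hp0] at h1
      exact Or.inr ⟨h2, by nlinarith [h1]⟩
  have hdpos : 0 < ((1-p) - p) * ((1-a)*p - (1-b)*(1-p)) := by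
    rcases hcase with ⟨h1,h2⟩|⟨h1,h2⟩
    · exact mul_pos (by linarith) (by linarith)
    · exact mul_pos_of_neg_of_neg (by linarith) (by linarith)
  have hdet : (1 - M).det = (((1-p) - p) * ((1-a)*p - (1-b)*(1-p))) / (p*(1-p)) := by
    simp only [Matrix.det_fin_two, Matrix.sub_apply, Matrix.one_apply, M, σ,
      Matrix.of_apply, Matrix.cons_val', Matrix.cons_val_zero, Matrix.cons_val_one,
      Matrix.head_cons, Matrix.head_fin_const, Matrix.empty_val',
      Matrix.cons_val_fin_one]
    norm_num
    field_simp
    ring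
  have hdetne : (1 - M).det ≠ 0 := by
    rw [hdet]
    exact ne_of_gt (div_pos hdpos (mul_pos hp0 hq0))
  have hunit : IsUnit (1 - M) :=
    (Matrix.isUnit_iff_isUnit_det _).2 (isUnit_iff_ne_zero.2 hdetne)
  -- E positivity
  have hE'pos : 0 < (b*(a+b)+(a-b))*(1-p) + (a*(a+b)-(a-b))*p := by
    rcases hcase with ⟨h1,h2⟩|⟨h1,h2⟩
    · rcases le_or_gt 0 (a*(a+b)-(a-b)) with hβ | hβ
      · nlinarith [mul_nonneg hβ (by linarith : (0:ℝ) ≤ (1-a)*p-(1-b)*(1-p)),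
          mul_pos hq0 (mul_pos (mul_pos ha0 hb0) (by linarith : (0:ℝ) < 2-a-b)), h1a]
      · nlinarith [mul_pos_of_neg_of_neg hβ (by linarith : p - (1-p) < 0),
          mul_pos hq0 (mul_pos hab hab)]
    · rcases le_or_gt 0 (b*(a+b)+(a-b)) with hα | hα
      · nlinarith [mul_nonneg hα (by linarith : (0:ℝ) ≤ (1-b)*(1-p)-(1-a)*p),
          mul_pos hp0 (mul_pos (mul_pos ha0 hb0) (by linarith : (0:ℝ) < 2-a-b)), h1b]
      · nlinarith [mul_pos_of_neg_of_neg hα (by linarith : (1-p) - p < 0),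
          mul_pos hp0 (mul_pos hab hab)]
  have hEpos : 0 < (b + (a - b) / (a + b)) * (1 - p) + (a - (a - b) / (a + b)) * p := by
    have : (b + (a - b) / (a + b)) * (1 - p) + (a - (a - b) / (a + b)) * p
        = ((b*(a+b)+(a-b))*(1-p) + (a*(a+b)-(a-b))*p) / (a+b) := by
      field_simp
    rw [this]
    exact div_pos hE'pos hab
  -- compute ES
  have hinv : (1 - M)⁻¹ = (1 - M).det⁻¹ • (1 - M).adjugate := by
    rw [Matrix.inv_def, Ring.inverse_eq_inv']
  have hES : ES = (1 - M).det⁻¹ *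
      ((b/(a+b)) * ((1 - M) 1 1 + (- (1-M) 0 1)) + (a/(a+b)) * ((- (1-M) 1 0) + (1-M) 0 0)) := by
    simp [ES, piv, hinv, Matrix.adjugate_fin_two, Matrix.mulVec, dotProduct, Matrix.vecHead, Matrix.vecTail,
      Fin.sum_univ_two]
    ring
  have hkey : 2 * ES - 1 =
      ((b + (a - b) / (a + b)) * (1 - p) + (a - (a - b) / (a + b)) * p) /
        (((1-p) - p) * ((1-a)*p - (1-b)*(1-p))) := by
    rw [hES, hdet]
    simp only [Matrix.sub_apply, Matrix.one_apply, M, σ, Matrix.of_apply,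
      Matrix.cons_val', Matrix.cons_val_zero, Matrix.cons_val_one,
      Matrix.head_cons, Matrix.head_fin_const, Matrix.empty_val',
      Matrix.cons_val_fin_one]
    norm_num
    field_simp [(mul_ne_zero_iff.mp (ne_of_gt hdpos)).1, (mul_ne_zero_iff.mp (ne_of_gt hdpos)).2, hp0.ne', hq0.ne', hab.ne',
      (fun h => (mul_ne_zero_iff.mp (ne_of_gt hdpos)).2 (by linarith) : p * (1 - a) - (1 - p) * (1 - b) ≠ 0)]
    rw [div_sub' (fun h => (mul_ne_zero_iff.mp (ne_of_gt hdpos)).2 (by linarith)), div_left_inj' (fun h => (mul_ne_zero_iff.mp (ne_of_gt hdpos)).2 (by linarith))]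
    ring
  have hne : 2 * ES - 1 ≠ 0 := by
    rw [hkey]
    exact ne_of_gt (div_pos hEpos hdpos)
  refine ⟨hunit, hne, ?_, ?_⟩
  · rw [hkey, inv_div]
    rw [div_eq_div_iff (ne_of_gt hEpos) (ne_of_gt hEpos)]
    ring
  · rw [hkey, inv_div]
    exact div_pos hdpos hEpos
end

section
/- Let a_−, a_+, b_−, b_+ ∈ (0,1), σ > 0, and let N be the 4×4 matrix N = [[(1−a_−)σ^{−1}, a_−σ, 0, 0], [0, 0, b_−σ^{−1}, (1−b_−)σ], [(1−a_+)σ^{−1}, a_+σ, 0, 0], [0, 0, b_+σ^{−1}, (1−b_+)σ]]. Set A = a_− + a_+b_− − a_−b_− and B = b_+ + a_+b_− − a_+b_+. Then det(I − N) = −σ^{−1}(σ−1)·((1−B)σ − (1−A)). -/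
set_option maxHeartbeats 2000000


theorem detFinFour (M : Matrix (Fin 4) (Fin 4) ℝ) : M.det =
    M 0 0 * (M 1 1 * M 2 2 * M 3 3 - M 1 1 * M 2 3 * M 3 2 - M 1 2 * M 2 1 * M 3 3
      + M 1 2 * M 2 3 * M 3 1 + M 1 3 * M 2 1 * M 3 2 - M 1 3 * M 2 2 * M 3 1)
    - M 0 1 * (M 1 0 * M 2 2 * M 3 3 - M 1 0 * M 2 3 * M 3 2 - M 1 2 * M 2 0 * M 3 3
      + M 1 2 * M 2 3 * M 3 0 + M 1 3 * M 2 0 * M 3 2 - M 1 3 * M 2 2 * M 3 0)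
    + M 0 2 * (M 1 0 * M 2 1 * M 3 3 - M 1 0 * M 2 3 * M 3 1 - M 1 1 * M 2 0 * M 3 3
      + M 1 1 * M 2 3 * M 3 0 + M 1 3 * M 2 0 * M 3 1 - M 1 3 * M 2 1 * M 3 0)
    - M 0 3 * (M 1 0 * M 2 1 * M 3 2 - M 1 0 * M 2 2 * M 3 1 - M 1 1 * M 2 0 * M 3 2
      + M 1 1 * M 2 2 * M 3 0 + M 1 2 * M 2 0 * M 3 1 - M 1 2 * M 2 1 * M 3 0) := by
  rw [Matrix.det_succ_row_zero]
  simp only [Fin.sum_univ_succ, Matrix.det_fin_three, Matrix.submatrix_apply, Fin.succAbove,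
    Fin.sum_univ_zero, Finset.univ_unique]
  norm_num [Fin.lt_def, Fin.ext_iff, show Fin.succ 2 = (3:Fin 4) from rfl,
    show Fin.castSucc 2 = (2:Fin 4) from rfl]
  ring

/-- For `a₋, a₊, b₋, b₊ ∈ (0,1)`, `σ > 0`, the 4×4 matrix
`N = [[(1-a₋)σ⁻¹, a₋σ, 0, 0], [0, 0, b₋σ⁻¹, (1-b₋)σ], [(1-a₊)σ⁻¹, a₊σ, 0, 0],
[0, 0, b₊σ⁻¹, (1-b₊)σ]]` satisfies `det (I - N) = -σ⁻¹ (σ-1) ((1-B)σ - (1-A))` where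
`A = a₋ + a₊b₋ - a₋b₋` and `B = b₊ + a₊b₋ - a₊b₊`. -/
theorem stmt12 (am ap bm bp σ : ℝ)
    (ham0 : 0 < am) (ham1 : am < 1) (hap0 : 0 < ap) (hap1 : ap < 1)
    (hbm0 : 0 < bm) (hbm1 : bm < 1) (hbp0 : 0 < bp) (hbp1 : bp < 1)
    (hσ : 0 < σ) :
    let N : Matrix (Fin 4) (Fin 4) ℝ :=
      Matrix.of ![![(1 - am) * σ⁻¹, am * σ, 0, 0], ![0, 0, bm * σ⁻¹, (1 - bm) * σ],
                  ![(1 - ap) * σ⁻¹, ap * σ, 0, 0], ![0, 0, bp * σ⁻¹, (1 - bp) * σ]]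
    let A : ℝ := am + ap * bm - am * bm
    let B : ℝ := bp + ap * bm - ap * bp
    (1 - N).det = -σ⁻¹ * (σ - 1) * ((1 - B) * σ - (1 - A)) := by
  intro N A B
  have hσ' : σ ≠ 0 := ne_of_gt hσ
  rw [detFinFour]
  simp only [N, A, B, Matrix.sub_apply, Matrix.one_apply, Matrix.of_apply]
  norm_num [Fin.ext_iff, Matrix.cons_val_zero, Matrix.cons_val_one, Matrix.head_cons,
    Matrix.cons_val_fin_one, Matrix.cons_val', Matrix.head_fin_const,
    show ((0:Fin 4):ℕ) = 0 from rfl, show ((1:Fin 4):ℕ) = 1 from rfl,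
    show ((2:Fin 4):ℕ) = 2 from rfl, show ((3:Fin 4):ℕ) = 3 from rfl,
    Matrix.cons_val_two, Matrix.tail_cons, Matrix.cons_val_three]
  field_simp
  ring
end
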